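/- Consider the two-species Lotka–Volterra system dx/dt = x(a+bx+cy), dy/dt = y(d+ex+fy) with b,f < 0, bf−ce > 0, and an interior fixed point (x*,y*) with x*,y* > 0. Then there exist constants A,B > 0 such that V(x,y) = A(x − x* log x) + B(y − y* log y) is strictly decreasing along any solution with x,y > 0 except at the fixed point; that is, dV/dt = Ab(x−x*)² + (Ac+Be)(x−x*)(y−y*) + Bf(y−y*)² ≤ 0 with equality only at (x*,y*). -/

import Mathlib

lemma quad_neg {α β γ : ℝ} (hα : α < 0) (hγ : γ < 0) (h : β ^ 2 < 4 * α * γ)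
    (u v : ℝ) :
    α * u ^ 2 + β * u * v + γ * v ^ 2 ≤ 0 ∧
      (α * u ^ 2 + β * u * v + γ * v ^ 2 = 0 → u = 0 ∧ v = 0) := by
  constructor
  · nlinarith [sq_nonneg (2 * α * u + β * v), sq_nonneg v, sq_nonneg u]
  · intro h0
    have hv2 : v ^ 2 ≤ 0 := by nlinarith [sq_nonneg (2 * α * u + β * v)]
    have hv : v = 0 := by
      have := sq_nonneg v; nlinarith [sq_abs v, abs_nonneg v]
    subst hv
    have hu2 : u ^ 2 ≤ 0 := by nlinarith
    have hu : u = 0 := by nlinarith [sq_nonneg u, sq_abs u, abs_nonneg u]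
    exact ⟨hu, rfl⟩

lemma exists_AB (b c e f : ℝ) (hb : b < 0) (hf : f < 0) (hdet : 0 < b * f - c * e) :
    ∃ A B : ℝ, 0 < A ∧ 0 < B ∧ (A * c + B * e) ^ 2 < 4 * A * B * (b * f) := by
  have hbf : 0 < b * f := mul_pos_of_neg_of_neg hb hf
  by_cases he : e = 0
  · refine ⟨1, (c ^ 2 + 1) / (4 * (b * f)), one_pos, by positivity, ?_⟩
    subst he
    have : 4 * 1 * ((c ^ 2 + 1) / (4 * (b * f))) * (b * f) = c ^ 2 + 1 := by
      field_simp [hb.ne, hf.ne]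
    rw [this]
    nlinarith
  · have he2 : (0:ℝ) < e ^ 2 := by positivity
    set B := (2 * (b * f) - c * e) / e ^ 2 with hBdef
    have hBe : B * e ^ 2 = 2 * (b * f) - c * e := by
      rw [hBdef]; field_simp
    have hBpos : 0 < B := by
      rw [hBdef]
      have : 0 < 2 * (b * f) - c * e := by nlinarith
      positivity
    refine ⟨1, B, one_pos, hBpos, ?_⟩
    have key : ((1 * c + B * e) ^ 2 - 4 * 1 * B * (b * f)) * e ^ 2
        = -(4 * (b * f) * (b * f - c * e)) := by
      linear_combination (2 * c * e + B * e ^ 2 + (2 * (b * f) - c * e)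
        - 4 * (b * f)) * hBe
    nlinarith [key, he2, mul_pos hbf hdet]

theorem lotka_volterra_lyapunov
    (a b c d e f xs ys : ℝ)
    (hb : b < 0) (hf : f < 0) (hdet : 0 < b * f - c * e)
    (hxs : 0 < xs) (hys : 0 < ys)
    (hfix1 : a + b * xs + c * ys = 0) (hfix2 : d + e * xs + f * ys = 0) :
    ∃ A B : ℝ, 0 < A ∧ 0 < B ∧
      (∀ x y : ℝ, 0 < x → 0 < y →
        (A * b * (x - xs)^2 + (A * c + B * e) * (x - xs) * (y - ys)
            + B * f * (y - ys)^2 ≤ 0 ∧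
         (A * b * (x - xs)^2 + (A * c + B * e) * (x - xs) * (y - ys)
            + B * f * (y - ys)^2 = 0 → x = xs ∧ y = ys))) ∧
      (∀ x y : ℝ → ℝ, (∀ t, 0 < x t) → (∀ t, 0 < y t) →
        (∀ t, HasDerivAt x (x t * (a + b * x t + c * y t)) t) →
        (∀ t, HasDerivAt y (y t * (d + e * x t + f * y t)) t) →
        ∀ t, HasDerivAt
          (fun s => A * (x s - xs * Real.log (x s)) + B * (y s - ys * Real.log (y s)))
          (A * b * (x t - xs)^2 + (A * c + B * e) * (x t - xs) * (y t - ys)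
            + B * f * (y t - ys)^2) t) := by
  obtain ⟨A, B, hA, hB, hlt⟩ := exists_AB b c e f hb hf hdet
  have hAb : A * b < 0 := mul_neg_of_pos_of_neg hA hb
  have hBf : B * f < 0 := mul_neg_of_pos_of_neg hB hf
  have hlt' : (A * c + B * e) ^ 2 < 4 * (A * b) * (B * f) := by nlinarith
  refine ⟨A, B, hA, hB, ?_, ?_⟩
  · intro x y hx hy
    obtain ⟨h1, h2⟩ := quad_neg hAb hBf hlt' (x - xs) (y - ys)
    constructor
    · calc A * b * (x - xs)^2 + (A * c + B * e) * (x - xs) * (y - ys)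
            + B * f * (y - ys)^2
          = A * b * (x - xs) ^ 2 + (A * c + B * e) * (x - xs) * (y - ys)
            + B * f * (y - ys) ^ 2 := by ring
        _ ≤ 0 := h1
    · intro h0
      have := h2 (by linarith [h0])
      constructor <;> [linarith [this.1]; linarith [this.2]]
  · intro x y hx hy hdx hdy t
    have hlx : HasDerivAt (fun s => Real.log (x s))
        ((x t * (a + b * x t + c * y t)) / x t) t := (hdx t).log (hx t).ne'
    have hly : HasDerivAt (fun s => Real.log (y s))
        ((y t * (d + e * x t + f * y t)) / y t) t := (hdy t).log (hy t).ne'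
    have hV : HasDerivAt
        (fun s => A * (x s - xs * Real.log (x s)) + B * (y s - ys * Real.log (y s)))
        (A * (x t * (a + b * x t + c * y t)
              - xs * ((x t * (a + b * x t + c * y t)) / x t))
          + B * (y t * (d + e * x t + f * y t)
              - ys * ((y t * (d + e * x t + f * y t)) / y t))) t :=
      (((hdx t).sub (hlx.const_mul xs)).const_mul A).add
        (((hdy t).sub (hly.const_mul ys)).const_mul B)
    convert hV using 1
    have ha : a = -(b * xs + c * ys) := by linarith
    have hd : d = -(e * xs + f * ys) := by linarith
    subst ha hd
    field_simp [(hx t).ne', (hy t).ne']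
    ring
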